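/- There is a probability-preserving bijection structure between first-hitting paths: for each k, path reversal gives a bijection between the set Γ_k of paths of length k+1 from 1 to m staying strictly between 0 and m before hitting m, and the set G_k of paths from m−1 to 0 staying strictly between 0 and m before hitting 0; moreover for every path s ∈ Γ_k, the ratio of the probability of s (under the mod-m walk) to the probability of its reversal equals (p_1 p_2 ⋯ p_{m−1})/(q_1 q_2 ⋯ q_{m−1}), independent of s and k. -/

import Mathlib

/-- Paths of length `k+1` from `1` to `m` staying in `{1,…,m-1}` before their
final step to `m` (encoded as functions `ℕ → ℤ`, padded by `0` outside the
index range `1,…,k+1`). -/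
def gammaSet (m k : ℕ) : Set (ℕ → ℤ) :=
  {s | s 1 = 1 ∧ s (k + 1) = (m : ℤ) ∧
    (∀ i, 1 ≤ i → i ≤ k → 1 ≤ s i ∧ s i ≤ (m : ℤ) - 1) ∧
    (∀ i, 1 ≤ i → i ≤ k → s (i + 1) - s i = 1 ∨ s (i + 1) - s i = -1) ∧
    (∀ i, i = 0 ∨ k + 2 ≤ i → s i = 0)}

/-- Paths of length `k+1` from `m-1` to `0` staying in `{1,…,m-1}` before their
final step to `0`. -/
def gSet (m k : ℕ) : Set (ℕ → ℤ) :=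
  {t | t 1 = (m : ℤ) - 1 ∧ t (k + 1) = 0 ∧
    (∀ i, 1 ≤ i → i ≤ k → 1 ≤ t i ∧ t i ≤ (m : ℤ) - 1) ∧
    (∀ i, 1 ≤ i → i ≤ k → t (i + 1) - t i = 1 ∨ t (i + 1) - t i = -1) ∧
    (∀ i, i = 0 ∨ k + 2 ≤ i → t i = 0)}

/-- Reversal of a path: `(s_1, …, s_k, m) ↦ (s_k, …, s_1, 0)`. -/
def revPath (k : ℕ) (s : ℕ → ℤ) : ℕ → ℤ :=
  fun i => if 1 ≤ i ∧ i ≤ k then s (k + 1 - i) else 0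

/-- Probability of a path under the mod-m walk with up-probabilities `p` and
down-probabilities `1 - p`. -/
def pathProb (p : ℤ → ℝ) (k : ℕ) (s : ℕ → ℤ) : ℝ :=
  ∏ i ∈ Finset.Icc 1 k, (if s (i + 1) = s i + 1 then p (s i) else 1 - p (s i))

open Finset

lemma prodIccTop (f : ℤ → ℝ) {b a : ℤ} (h : b ≤ a) :
    ∏ j ∈ Finset.Icc b a, f j = (∏ j ∈ Finset.Icc b (a-1), f j) * f a := by
  have : Finset.Icc b a = insert a (Finset.Icc b (a-1)) := by
    ext x; simp [Finset.mem_Icc, Finset.mem_insert]; omega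
  rw [this, Finset.prod_insert (by simp [Finset.mem_Icc]), mul_comm]

lemma prodIccBot (f : ℤ → ℝ) {b a : ℤ} (h : b ≤ a) :
    ∏ j ∈ Finset.Icc b a, f j = f b * (∏ j ∈ Finset.Icc (b+1) a, f j) := by
  have : Finset.Icc b a = insert b (Finset.Icc (b+1) a) := by
    ext x; simp [Finset.mem_Icc, Finset.mem_insert]; omega
  rw [this, Finset.prod_insert (by simp [Finset.mem_Icc])]

lemma prodIccCast (f : ℤ → ℝ) (a b : ℕ) :
    ∏ j ∈ Finset.Icc a b, f (j:ℤ) = ∏ j ∈ Finset.Icc (a:ℤ) (b:ℤ), f j := by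
  refine Finset.prod_nbij' (fun n => (n:ℤ)) Int.toNat ?_ ?_ ?_ ?_ ?_
  · intro x hx; simp only [Finset.mem_Icc] at *; omega
  · intro x hx; simp only [Finset.mem_Icc] at *; omega
  · intro x hx; show ((x:ℤ)).toNat = x; omega
  · intro x hx; simp only [Finset.mem_Icc] at hx; show ((x.toNat : ℤ)) = x; omega
  · intro x hx; rfl

noncomputable def walkPhi (p : ℤ → ℝ) : ℤ → ℝ :=
  fun a => (∏ j ∈ Finset.Icc (1:ℤ) (a-1), p j) / ∏ j ∈ Finset.Icc (2:ℤ) a, (1 - p j)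

lemma walkPhi_one (p : ℤ → ℝ) : walkPhi p 1 = 1 := by
  simp [walkPhi]

lemma walkPhi_succ (p : ℤ → ℝ) (hp : ∀ j, p j ≠ 0 ∧ p j ≠ 1) {a : ℤ} (h : 1 ≤ a) :
    walkPhi p (a+1) * (1 - p (a+1)) = walkPhi p a * p a := by
  have hY : ∏ j ∈ Finset.Icc (2:ℤ) a, (1 - p j) ≠ 0 :=
    Finset.prod_ne_zero_iff.mpr fun j _ => sub_ne_zero.mpr (Ne.symm (hp j).2)
  have hc : (1 : ℝ) - p (a+1) ≠ 0 := sub_ne_zero.mpr (Ne.symm (hp (a+1)).2)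
  unfold walkPhi
  rw [show a + 1 - 1 = a by ring, prodIccTop p h, prodIccTop (fun j => 1 - p j) (by omega : (2:ℤ) ≤ a + 1)]
  rw [show a + 1 - 1 = a by ring]
  field_simp

lemma walkTelescope (p : ℤ → ℝ) (hp : ∀ j, p j ≠ 0 ∧ p j ≠ 1) (m k : ℕ) (s : ℕ → ℤ)
    (hbd : ∀ i, 1 ≤ i → i ≤ k → 1 ≤ s i ∧ s i ≤ (m:ℤ) - 1)
    (hstep : ∀ i, 1 ≤ i → i ≤ k → s (i+1) - s i = 1 ∨ s (i+1) - s i = -1) :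
    ∀ n, n + 1 ≤ k →
      (∏ i ∈ Finset.Icc 1 n, (if s (i+1) = s i + 1 then p (s i) else 1 - p (s i)))
          * walkPhi p (s 1)
      = (∏ i ∈ Finset.Icc 1 n, (if s i = s (i+1) + 1 then p (s (i+1)) else 1 - p (s (i+1))))
          * walkPhi p (s (n+1)) := by
  intro n
  induction n with
  | zero => intro _; simp
  | succ n ih =>
    intro hk
    have ih' := ih (by omega)
    rw [Finset.prod_Icc_succ_top (by omega), Finset.prod_Icc_succ_top (by omega)]
    have key : (if s (n+1+1) = s (n+1) + 1 then p (s (n+1)) else 1 - p (s (n+1)))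
        * walkPhi p (s (n+1))
        = (if s (n+1) = s (n+1+1) + 1 then p (s (n+1+1)) else 1 - p (s (n+1+1)))
        * walkPhi p (s (n+1+1)) := by
      have hb1 := hbd (n+1) (by omega) (by omega)
      have hb2 := hbd (n+1+1) (by omega) (by omega)
      rcases hstep (n+1) (by omega) (by omega) with h | h
      · -- up step
        have e2 : s (n+1+1) = s (n+1) + 1 := by omega
        rw [if_pos e2, if_neg (by omega), e2]
        have := walkPhi_succ p hp hb1.1
        linarith [this]
      · -- down step
        have e2 : s (n+1+1) = s (n+1) - 1 := by omega
        rw [if_neg (by omega), if_pos (by omega), e2]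
        have h1 : (1:ℤ) ≤ s (n+1) - 1 := by omega
        have h2 := walkPhi_succ p hp h1
        rw [show s (n+1) - 1 + 1 = s (n+1) by ring] at h2
        linarith [h2]
    calc (∏ i ∈ Finset.Icc 1 n, (if s (i+1) = s i + 1 then p (s i) else 1 - p (s i)))
          * (if s (n+1+1) = s (n+1) + 1 then p (s (n+1)) else 1 - p (s (n+1)))
          * walkPhi p (s 1)
        = (if s (n+1+1) = s (n+1) + 1 then p (s (n+1)) else 1 - p (s (n+1)))
          * ((∏ i ∈ Finset.Icc 1 n, (if s (i+1) = s i + 1 then p (s i) else 1 - p (s i)))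
            * walkPhi p (s 1)) := by ring
      _ = (if s (n+1+1) = s (n+1) + 1 then p (s (n+1)) else 1 - p (s (n+1)))
          * ((∏ i ∈ Finset.Icc 1 n, (if s i = s (i+1) + 1 then p (s (i+1)) else 1 - p (s (i+1))))
            * walkPhi p (s (n+1))) := by rw [ih']
      _ = (∏ i ∈ Finset.Icc 1 n, (if s i = s (i+1) + 1 then p (s (i+1)) else 1 - p (s (i+1))))
          * ((if s (n+1+1) = s (n+1) + 1 then p (s (n+1)) else 1 - p (s (n+1)))
            * walkPhi p (s (n+1))) := by ring
      _ = (∏ i ∈ Finset.Icc 1 n, (if s i = s (i+1) + 1 then p (s (i+1)) else 1 - p (s (i+1))))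
          * (if s (n+1) = s (n+1+1) + 1 then p (s (n+1+1)) else 1 - p (s (n+1+1)))
          * walkPhi p (s (n+1+1)) := by rw [key]; ring

lemma gamma_kpos {m k : ℕ} (hm : 2 ≤ m) {s : ℕ → ℤ} (hs : s ∈ gammaSet m k) : 1 ≤ k := by
  by_contra h
  obtain ⟨h1, h2, -, -, -⟩ := hs
  have : k = 0 := by omega
  subst this
  rw [h1] at h2
  omega

lemma g_kpos {m k : ℕ} (hm : 2 ≤ m) {t : ℕ → ℤ} (ht : t ∈ gSet m k) : 1 ≤ k := by
  by_contra h
  obtain ⟨h1, h2, -, -, -⟩ := ht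
  have : k = 0 := by omega
  subst this
  rw [h1] at h2
  omega

lemma gamma_top {m k : ℕ} (hm : 2 ≤ m) {s : ℕ → ℤ} (hs : s ∈ gammaSet m k) :
    s k = (m : ℤ) - 1 := by
  have hk := gamma_kpos hm hs
  obtain ⟨h1, h2, hbd, hstep, -⟩ := hs
  have := hstep k hk le_rfl
  have := hbd k hk le_rfl
  omega

lemma g_bot {m k : ℕ} (hm : 2 ≤ m) {t : ℕ → ℤ} (ht : t ∈ gSet m k) : t k = 1 := by
  have hk := g_kpos hm ht
  obtain ⟨h1, h2, hbd, hstep, -⟩ := ht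
  have := hstep k hk le_rfl
  have := hbd k hk le_rfl
  omega

lemma rev_mapsTo {m k : ℕ} (hm : 2 ≤ m) :
    Set.MapsTo (revPath k) (gammaSet m k) (gSet m k) := by
  intro s hs
  have hk := gamma_kpos hm hs
  have htop := gamma_top hm hs
  obtain ⟨h1, h2, hbd, hstep, hpad⟩ := hs
  refine ⟨?_, ?_, ?_, ?_, ?_⟩
  · show revPath k s 1 = (m:ℤ) - 1
    rw [revPath, if_pos ⟨le_refl 1, hk⟩, show k + 1 - 1 = k from by omega, htop]
  · show revPath k s (k+1) = 0
    rw [revPath, if_neg (by omega)]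
  · intro i hi1 hik
    show 1 ≤ revPath k s i ∧ _
    rw [revPath, if_pos ⟨hi1, hik⟩]
    exact hbd (k+1-i) (by omega) (by omega)
  · intro i hi1 hik
    show revPath k s (i+1) - revPath k s i = 1 ∨ _ = -1
    rcases Nat.lt_or_ge i k with hlt | hge
    · rw [revPath, revPath, if_pos ⟨by omega, by omega⟩, if_pos ⟨hi1, hik⟩]
      have e1 : k + 1 - (i+1) = k - i := by omega
      have e2 : k + 1 - i = (k - i) + 1 := by omega
      rw [e1, e2]
      have := hstep (k-i) (by omega) (by omega)
      omega
    · have : i = k := by omega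
      subst this
      rw [revPath, revPath, if_neg (by omega), if_pos ⟨hi1, le_rfl⟩,
        show i + 1 - i = 1 from by omega, h1]
      omega
  · intro i hi
    show revPath k s i = 0
    rw [revPath, if_neg (by omega)]

lemma rev_injOn {m k : ℕ} (hm : 2 ≤ m) :
    Set.InjOn (revPath k) (gammaSet m k) := by
  intro s hs s' hs' h
  have hk := gamma_kpos hm hs
  funext i
  rcases Nat.lt_or_ge i 1 with hi | hi
  · rw [hs.2.2.2.2 i (by omega), hs'.2.2.2.2 i (by omega)]
  rcases Nat.lt_or_ge k i with hik | hik
  · by_cases he : i = k + 1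
    · subst he; rw [hs.2.1, hs'.2.1]
    · rw [hs.2.2.2.2 i (by omega), hs'.2.2.2.2 i (by omega)]
  · have := congrFun h (k + 1 - i)
    rw [revPath, revPath, if_pos ⟨by omega, by omega⟩, if_pos ⟨by omega, by omega⟩,
      show k + 1 - (k + 1 - i) = i from by omega] at this
    exact this

lemma rev_surjOn {m k : ℕ} (hm : 2 ≤ m) :
    Set.SurjOn (revPath k) (gammaSet m k) (gSet m k) := by
  intro t ht
  have hk := g_kpos hm ht
  have hbot := g_bot hm ht
  obtain ⟨h1, h2, hbd, hstep, hpad⟩ := ht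
  set v : ℕ → ℤ := fun i => if i = k + 1 then (m:ℤ) else
    if 1 ≤ i ∧ i ≤ k then t (k+1-i) else 0 with hv
  have hv1 : ∀ i, 1 ≤ i → i ≤ k → v i = t (k+1-i) := by
    intro i ha hb; rw [hv]; dsimp only; rw [if_neg (by omega), if_pos ⟨ha, hb⟩]
  have hv2 : v (k+1) = (m:ℤ) := by rw [hv]; dsimp only; rw [if_pos rfl]
  have hv3 : ∀ i, i = 0 ∨ k + 2 ≤ i → v i = 0 := by
    intro i hi; rw [hv]; dsimp only; rw [if_neg (by omega), if_neg (by omega)]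
  refine ⟨v, ⟨?_, hv2, ?_, ?_, hv3⟩, ?_⟩
  · rw [hv1 1 le_rfl hk, show k + 1 - 1 = k from by omega, hbot]
  · intro i hi1 hik
    rw [hv1 i hi1 hik]
    exact hbd (k+1-i) (by omega) (by omega)
  · intro i hi1 hik
    rcases Nat.lt_or_ge i k with hlt | hge
    · rw [hv1 (i+1) (by omega) (by omega), hv1 i hi1 hik]
      have e1 : k + 1 - (i+1) = k - i := by omega
      have e2 : k + 1 - i = (k - i) + 1 := by omega
      rw [e1, e2]
      have := hstep (k-i) (by omega) (by omega)
      omega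
    · have : i = k := by omega
      subst this
      rw [hv2, hv1 i hi1 le_rfl, show i + 1 - i = 1 from by omega, h1]
      omega
  · funext i
    rcases Nat.lt_or_ge i 1 with hi | hi
    · rw [revPath, if_neg (by omega), hpad i (by omega)]
    rcases Nat.lt_or_ge k i with hik | hik
    · rw [revPath, if_neg (by omega)]
      rcases Nat.eq_or_lt_of_le hik with he | hlt
      · rw [← he, h2]
      · rw [hpad i (by omega)]
    · rw [revPath, if_pos ⟨hi, hik⟩, hv1 (k+1-i) (by omega) (by omega),
        show k + 1 - (k + 1 - i) = i from by omega]

/-- Path reversal is a probability-ratio-preserving bijection between `Γ_k`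
(first-hitting paths from `1` to `m`) and `G_k` (first-hitting paths from
`m-1` to `0`); for every `s ∈ Γ_k` the ratio of the probability of `s` to that
of its reversal equals `(p_1 ⋯ p_{m-1})/(q_1 ⋯ q_{m-1})`, independent of `s`
and `k`. -/
theorem stmt_6 (m : ℕ) (hm : 2 ≤ m) (p : ℤ → ℝ)
    (hp : ∀ j, p j ≠ 0 ∧ p j ≠ 1) (hper : ∀ j, p (j + m) = p j) (k : ℕ) :
    Set.BijOn (revPath k) (gammaSet m k) (gSet m k) ∧
    ∀ s ∈ gammaSet m k,
      pathProb p k s / pathProb p k (revPath k s) =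
        (∏ j ∈ Finset.Icc 1 (m - 1), p j) /
          (∏ j ∈ Finset.Icc 1 (m - 1), (1 - p j)) := by
  refine ⟨⟨rev_mapsTo hm, rev_injOn hm, rev_surjOn hm⟩, ?_⟩
  intro s hs
  have hk := gamma_kpos hm hs
  have hsk' := gamma_top hm hs
  obtain ⟨k', rfl⟩ : ∃ k', k = k' + 1 := ⟨k - 1, by omega⟩
  obtain ⟨h1, h2, hbd, hstep, hpad⟩ := hs
  have hsk : s (k' + 1) = (m:ℤ) - 1 := hsk'
  set F := ∏ i ∈ Finset.Icc 1 k', (if s (i+1) = s i + 1 then p (s i) else 1 - p (s i)) with hF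
  set B := ∏ i ∈ Finset.Icc 1 k',
    (if s i = s (i+1) + 1 then p (s (i+1)) else 1 - p (s (i+1))) with hB
  have hA : pathProb p (k'+1) s = F * p ((m:ℤ)-1) := by
    rw [pathProb, Finset.prod_Icc_succ_top (by omega)]
    congr 1
    rw [if_pos (by omega : s (k'+1+1) = s (k'+1) + 1), hsk]
  have ht1 : ∀ i, 1 ≤ i → i ≤ k'+1 → revPath (k'+1) s i = s (k'+2-i) := by
    intro i ha hb; rw [revPath, if_pos ⟨ha, hb⟩]
  have ht2 : revPath (k'+1) s (k'+1+1) = 0 := by rw [revPath, if_neg (by omega)]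
  have hB2 : pathProb p (k'+1) (revPath (k'+1) s) = B * (1 - p 1) := by
    rw [pathProb, Finset.prod_Icc_succ_top (by omega)]
    congr 1
    · rw [hB]
      refine Finset.prod_nbij' (fun i => k'+1-i) (fun i => k'+1-i) ?_ ?_ ?_ ?_ ?_
      · intro a ha; simp only [Finset.mem_Icc] at *; omega
      · intro a ha; simp only [Finset.mem_Icc] at *; omega
      · intro a ha; simp only [Finset.mem_Icc] at ha; omega
      · intro a ha; simp only [Finset.mem_Icc] at ha; omega
      · intro a ha
        simp only [Finset.mem_Icc] at ha
        rw [ht1 a (by omega) (by omega), ht1 (a+1) (by omega) (by omega),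
          show k'+2-(a+1) = k'+1-a from by omega, show (k'+1-a)+1 = k'+2-a from by omega]
    · rw [ht2, ht1 (k'+1) (by omega) le_rfl, show k'+2-(k'+1) = 1 from by omega, h1,
        if_neg (by omega)]
  have hT := walkTelescope p hp m (k'+1) s hbd hstep k' le_rfl
  rw [h1, walkPhi_one, mul_one, hsk] at hT
  rw [← hF, ← hB] at hT
  have hBne : B ≠ 0 := by
    rw [hB]
    refine Finset.prod_ne_zero_iff.mpr fun i _ => ?_
    split
    · exact (hp _).1
    · exact sub_ne_zero.mpr (Ne.symm (hp _).2)
  have hq1 : (1:ℝ) - p 1 ≠ 0 := sub_ne_zero.mpr (Ne.symm (hp 1).2)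
  have hQ : ∏ j ∈ Finset.Icc (2:ℤ) ((m:ℤ)-1), (1 - p j) ≠ 0 :=
    Finset.prod_ne_zero_iff.mpr fun j _ => sub_ne_zero.mpr (Ne.symm (hp j).2)
  have e : ((m-1:ℕ):ℤ) = (m:ℤ) - 1 := by omega
  have hcast1 : ∏ j ∈ Finset.Icc 1 (m-1), p (j:ℤ)
      = ∏ j ∈ Finset.Icc (1:ℤ) ((m:ℤ)-1), p j := by
    rw [prodIccCast, e]; norm_num
  have hcast2 : ∏ j ∈ Finset.Icc 1 (m-1), (1 - p (j:ℤ))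
      = ∏ j ∈ Finset.Icc (1:ℤ) ((m:ℤ)-1), (1 - p j) := by
    rw [prodIccCast (fun j => 1 - p j), e]; norm_num
  rw [hA, hB2, hT, hcast1, hcast2, prodIccTop p (by omega : (1:ℤ) ≤ (m:ℤ)-1),
    prodIccBot (fun j => 1 - p j) (by omega : (1:ℤ) ≤ (m:ℤ)-1)]
  simp only [walkPhi]
  norm_num
  field_simp
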